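/- If an m×n matrix M' over Σ is fair w.r.t. γ and d(M,M') < c̃, then no new type is created: every type of M' is a type of M, i.e., types(M') ⊆ types(M). -/

import Mathlib

variable {m n c : ℕ} {A : Type*} [Fintype A] [DecidableEq A]

/-- The set of distinct row types of a matrix. -/
def types (M : Fin m → Fin n → A) : Finset (Fin n → A) :=
  Finset.univ.image (fun i => M i)

/-- The number of distinct rows of a matrix. -/
def dr (M : Fin m → Fin n → A) : ℕ := (types M).card

/-- The cluster of a type `τ` in `M`: the set of rows whose type is `τ`. -/
def cluster (M : Fin m → Fin n → A) (τ : Fin n → A) : Finset (Fin m) :=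
  Finset.univ.filter (fun i => M i = τ)

/-- The edit cost between two matrices: the number of positions where they differ. -/
def editCost (M M' : Fin m → Fin n → A) : ℕ :=
  ((Finset.univ : Finset (Fin m × Fin n)).filter (fun p => M p.1 p.2 ≠ M' p.1 p.2)).card

/-- The number of occurrences of color `z` in the coloring `γ`. -/
def colorCount (γ : Fin m → Fin c) (z : Fin c) : ℕ :=
  (Finset.univ.filter (fun i => γ i = z)).card

/-- A set of rows is fair w.r.t. `γ` if it witnesses the same color distribution as `γ`. -/
def fairSet (γ : Fin m → Fin c) (S : Finset (Fin m)) : Prop :=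
  ∀ z : Fin c, m * (S.filter (fun i => γ i = z)).card = colorCount γ z * S.card

/-- A matrix is fair if the cluster of each of its types is fair. -/
def fairMatrix (γ : Fin m → Fin c) (M' : Fin m → Fin n → A) : Prop :=
  ∀ τ ∈ types M', fairSet γ (cluster M' τ)

/-- The fairlet size `c̃ = m / gcd(|γ|_1, …, |γ|_c)`. -/
def fairletSize (γ : Fin m → Fin c) : ℕ :=
  m / Finset.univ.gcd (colorCount γ)

/-- A fair matrix obtained with fewer than `c̃` edits creates no new type. -/
theorem no_new_type_of_editCost_lt_fairletSize (hm : 0 < m) (hn : 0 < n)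
    (γ : Fin m → Fin c) (hγ : Function.Surjective γ)
    (M M' : Fin m → Fin n → A) (h : fairMatrix γ M')
    (hk : editCost M M' < fairletSize γ) :
    types M' ⊆ types M := by
  intro τ hτ
  by_contra hτM
  set S := cluster M' τ with hSdef
  have hfair := h τ hτ
  obtain ⟨i0, -, hi0⟩ := Finset.mem_image.mp hτ
  have hi0S : i0 ∈ S := by simp [hSdef, cluster, hi0]
  have hSpos : 0 < S.card := Finset.card_pos.mpr ⟨i0, hi0S⟩
  set g := Finset.univ.gcd (colorCount γ) with hgdef
  have hcc : ∀ z, 0 < colorCount γ z := fun z => by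
    obtain ⟨i, hi⟩ := hγ z
    exact Finset.card_pos.mpr ⟨i, by simp [colorCount, hi]⟩
  have hcpos : 0 < c := by
    have i0 : Fin m := ⟨0, hm⟩
    exact (γ i0).pos
  have hz0 : (⟨0, hcpos⟩ : Fin c) ∈ (Finset.univ : Finset (Fin c)) := Finset.mem_univ _
  have hgpos : 0 < g := by
    rcases Nat.eq_zero_or_pos g with h0 | h0
    · exfalso
      have hz := Finset.gcd_eq_zero_iff.mp (hgdef ▸ h0) ⟨0, hcpos⟩ hz0
      have := hcc ⟨0, hcpos⟩
      omega
    · exact h0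
  have hgm : g ∣ m := by
    have hsum : m = ∑ z, colorCount γ z := by
      have := Finset.card_eq_sum_card_fiberwise
        (f := γ) (s := (Finset.univ : Finset (Fin m)))
        (t := (Finset.univ : Finset (Fin c))) (fun x _ => Finset.mem_univ _)
      simpa [colorCount, Finset.card_univ] using this
    rw [hsum]
    exact Finset.dvd_sum (fun z _ => Finset.gcd_dvd (Finset.mem_univ z))
  have hdvd : m ∣ g * S.card := by
    have heq : (Finset.univ.gcd fun z => colorCount γ z * S.card) = g * S.card := by
      simpa using (Finset.gcd_mul_right (s := (Finset.univ : Finset (Fin c)))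
        (f := colorCount γ) (a := S.card))
    rw [← heq]
    exact Finset.dvd_gcd (fun z _ => ⟨(S.filter (fun i => γ i = z)).card, (hfair z).symm⟩)
  have hctilde : fairletSize γ ∣ S.card := by
    have hm' : g * (m / g) = m := Nat.mul_div_cancel' hgm
    have hdvd2 : g * (m / g) ∣ g * S.card := by rw [hm']; exact hdvd
    have : m / g ∣ S.card := (mul_dvd_mul_iff_left hgpos.ne').mp hdvd2
    simpa [fairletSize, hgdef] using this
  have hle : fairletSize γ ≤ S.card := Nat.le_of_dvd hSpos hctilde
  have hrow : ∀ i : Fin m, ∃ j : Fin n, i ∈ S → M i j ≠ M' i j := by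
    intro i
    by_cases hi : i ∈ S
    · have hMi' : M' i = τ := by simpa [hSdef, cluster] using hi
      have hne : M i ≠ M' i := by
        rw [hMi']
        exact fun hMi => hτM (Finset.mem_image.mpr ⟨i, Finset.mem_univ i, hMi⟩)
      obtain ⟨j, hj⟩ := Function.ne_iff.mp hne
      exact ⟨j, fun _ => hj⟩
    · exact ⟨⟨0, hn⟩, fun h' => absurd h' hi⟩
  choose j hj using hrow
  have hcard : S.card ≤ editCost M M' := by
    apply Finset.card_le_card_of_injOn (fun i => (i, j i))
    · intro i hi
      simp only [editCost, Finset.mem_coe, Finset.mem_filter, Finset.mem_univ, true_and]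
      exact hj i hi
    · intro a _ b _ hab
      exact congrArg Prod.fst hab
  omega
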